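/- Let X be a normed linear space and let A, B be convex bounded subsets of X. Then for every bounded subset C of X, the Hausdorff distance satisfies d_H(A + C, B + C) = d_H(A, B), where + denotes the Minkowski sum. -/

import Mathlib

open Metric Pointwise
open Filter Topology


lemma radstrom_cancel {X : Type*} [NormedAddCommGroup X] [NormedSpace ℝ X]
    {A D C : Set X} (hD : Convex ℝ D) (hCne : C.Nonempty) (hCb : Bornology.IsBounded C)
    (h : A + C ⊆ D + C) : A ⊆ closure D := by
  obtain ⟨c₀, hc₀⟩ := hCne
  obtain ⟨R, hR⟩ := hCb.subset_closedBall 0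
  intro a ha
  have step : ∀ c : {c : X // c ∈ C},
      ∃ p : X × {c : X // c ∈ C}, p.1 ∈ D ∧ a + c.1 = p.1 + p.2.1 := by
    intro c
    have hm : a + c.1 ∈ D + C := h (Set.add_mem_add ha c.2)
    obtain ⟨d, hd, c', hc', hsum⟩ := hm
    exact ⟨(d, ⟨c', hc'⟩), hd, hsum.symm⟩
  choose f hf1 hf2 using step
  set cseq : ℕ → {c : X // c ∈ C} :=
    fun n => Nat.rec ⟨c₀, hc₀⟩ (fun _ c => (f c).2) n with hcseq
  set dseq : ℕ → X := fun n => (f (cseq n)).1 with hdseq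
  have hdD : ∀ n, dseq n ∈ D := fun n => hf1 _
  have hrec : ∀ n, a + (cseq n).1 = dseq n + (cseq (n + 1)).1 := fun n => hf2 _
  have key : ∀ n : ℕ, (n : ℝ) • a + c₀ = (∑ i ∈ Finset.range n, dseq i) + (cseq n).1 := by
    intro n
    induction n with
    | zero => simp [hcseq]
    | succ n ih =>
      rw [Finset.sum_range_succ]
      push_cast
      have h1 : ((n : ℝ) + 1) • a + c₀ = ((n : ℝ) • a + c₀) + a := by
        rw [add_smul, one_smul]; abel
      rw [h1, ih]
      have h2 := hrec n
      calc (∑ i ∈ Finset.range n, dseq i) + (cseq n).1 + a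
          = (∑ i ∈ Finset.range n, dseq i) + (a + (cseq n).1) := by abel
        _ = (∑ i ∈ Finset.range n, dseq i) + (dseq n + (cseq (n+1)).1) := by rw [h2]
        _ = (∑ i ∈ Finset.range n, dseq i) + dseq n + (cseq (n+1)).1 := by abel
  set x : ℕ → X := fun n => ((n : ℝ))⁻¹ • ∑ i ∈ Finset.range n, dseq i with hx
  have hmem : ∀ n : ℕ, 0 < n → x n ∈ D := by
    intro n hn
    have hn' : (n : ℝ) ≠ 0 := Nat.cast_ne_zero.mpr hn.ne'
    have : x n = ∑ i ∈ Finset.range n, ((n : ℝ))⁻¹ • dseq i := by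
      show ((n : ℝ))⁻¹ • ∑ i ∈ Finset.range n, dseq i = _
      rw [Finset.smul_sum]
    rw [this]
    refine hD.sum_mem (fun i _ => by positivity) ?_ (fun i _ => hdD i)
    simp [Finset.sum_const, hn']
  have hnormC : ∀ c : {c : X // c ∈ C}, ‖c.1‖ ≤ R := by
    intro c
    have := hR c.2
    simpa [mem_closedBall, dist_eq_norm] using this
  have hdist : ∀ n : ℕ, 0 < n → dist (x n) a ≤ (2 * R) * ((n : ℝ))⁻¹ := by
    intro n hn
    have hn' : (n : ℝ) ≠ 0 := Nat.cast_ne_zero.mpr hn.ne'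
    have hxa : a - x n = ((n : ℝ))⁻¹ • ((cseq n).1 - c₀) := by
      have := key n
      have hsum : (∑ i ∈ Finset.range n, dseq i) = (n : ℝ) • a + c₀ - (cseq n).1 := by
        rw [this]; abel
      show a - ((n : ℝ))⁻¹ • ∑ i ∈ Finset.range n, dseq i = _
      rw [hsum]
      match_scalars <;> field_simp <;> ring
    rw [dist_comm, dist_eq_norm, hxa, norm_smul]
    have h1 : ‖(cseq n).1 - c₀‖ ≤ 2 * R := by
      calc ‖(cseq n).1 - c₀‖ ≤ ‖(cseq n).1‖ + ‖c₀‖ := norm_sub_le _ _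
        _ ≤ R + R := add_le_add (hnormC _) (hnormC ⟨c₀, hc₀⟩)
        _ = 2 * R := by ring
    have h2 : ‖((n:ℝ))⁻¹‖ = ((n:ℝ))⁻¹ := by
      rw [Real.norm_eq_abs, abs_of_nonneg (by positivity)]
    rw [h2]
    calc ((n:ℝ))⁻¹ * ‖(cseq n).1 - c₀‖ ≤ ((n:ℝ))⁻¹ * (2 * R) := by
          apply mul_le_mul_of_nonneg_left h1 (by positivity)
      _ = (2 * R) * ((n:ℝ))⁻¹ := by ring
  have htend : Tendsto (fun n : ℕ => x (n + 1)) atTop (𝓝 a) := by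
    rw [tendsto_iff_dist_tendsto_zero]
    apply squeeze_zero (fun n => dist_nonneg)
      (fun n => hdist (n+1) n.succ_pos)
    have : Tendsto (fun n : ℕ => (2 * R) * (((n:ℝ)+1))⁻¹) atTop (𝓝 ((2*R) * 0)) :=
      Tendsto.const_mul _ (by
        simpa [one_div] using tendsto_one_div_add_atTop_nhds_zero_nat (𝕜 := ℝ))
    simpa using this
  exact mem_closure_of_tendsto htend (Eventually.of_forall (fun n => hmem (n+1) n.succ_pos))

lemma infDist_le_hd_add {X : Type*} [NormedAddCommGroup X] [NormedSpace ℝ X]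
    {A B C : Set X} (hBne : B.Nonempty) (hCne : C.Nonempty)
    (hCb : Bornology.IsBounded C) (hBc : Convex ℝ B)
    (hfin : EMetric.hausdorffEdist (A + C) (B + C) ≠ ⊤)
    {a : X} (ha : a ∈ A) : infDist a B ≤ hausdorffDist (A + C) (B + C) := by
  set r := hausdorffDist (A + C) (B + C) with hr
  have hr0 : 0 ≤ r := hausdorffDist_nonneg
  refine le_of_forall_pos_le_add fun ε hε => ?_
  have hsub : A + C ⊆ (B + ball (0 : X) (r + ε)) + C := by
    rintro z hz
    have h1 : infDist z (B + C) ≤ r := infDist_le_hausdorffDist_of_mem hz hfin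
    have h2 : infDist z (B + C) < r + ε := lt_of_le_of_lt h1 (by linarith)
    obtain ⟨y, hy, hdy⟩ := (infDist_lt_iff (hBne.add hCne)).mp h2
    obtain ⟨b, hb, c, hc, rfl⟩ := hy
    have : z = (b + (z - (b + c))) + c := by abel
    rw [this]
    refine Set.add_mem_add (Set.add_mem_add hb ?_) hc
    rw [mem_ball, dist_eq_norm, sub_zero]
    simpa [dist_eq_norm] using hdy
  have hDc : Convex ℝ (B + ball (0 : X) (r + ε)) := hBc.add (convex_ball _ _)
  have hcl : a ∈ closure (B + ball (0 : X) (r + ε)) :=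
    radstrom_cancel hDc hCne hCb hsub ha
  have hclosed : IsClosed {z : X | infDist z B ≤ r + ε} :=
    isClosed_le (continuous_infDist_pt B) continuous_const
  have hsub2 : B + ball (0 : X) (r + ε) ⊆ {z : X | infDist z B ≤ r + ε} := by
    rintro z ⟨b, hb, w, hw, rfl⟩
    have : dist (b + w) b = ‖w‖ := by simp [dist_eq_norm]
    calc infDist (b + w) B ≤ dist (b + w) b := infDist_le_dist_of_mem hb
      _ ≤ r + ε := by rw [this]; exact le_of_lt (by simpa [mem_ball, dist_eq_norm] using hw)
  exact closure_minimal hsub2 hclosed hcl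

/-- For convex bounded nonempty subsets `A`, `B` of a normed space and any bounded
nonempty `C`, the Hausdorff distance satisfies `d_H(A + C, B + C) = d_H(A, B)`. -/
theorem hausdorffDist_add_cancel {X : Type*} [NormedAddCommGroup X] [NormedSpace ℝ X]
    (A B C : Set X) (hAne : A.Nonempty) (hBne : B.Nonempty) (hCne : C.Nonempty)
    (hAb : Bornology.IsBounded A) (hBb : Bornology.IsBounded B)
    (hCb : Bornology.IsBounded C) (hAc : Convex ℝ A) (hBc : Convex ℝ B) :
    hausdorffDist (A + C) (B + C) = hausdorffDist A B := by
  have hABfin : EMetric.hausdorffEdist A B ≠ ⊤ :=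
    hausdorffEdist_ne_top_of_nonempty_of_bounded hAne hBne hAb hBb
  have hACfin : EMetric.hausdorffEdist (A + C) (B + C) ≠ ⊤ :=
    hausdorffEdist_ne_top_of_nonempty_of_bounded (hAne.add hCne) (hBne.add hCne)
      (hAb.add hCb) (hBb.add hCb)
  apply le_antisymm
  · -- d_H(A+C, B+C) ≤ d_H(A,B)
    refine hausdorffDist_le_of_infDist hausdorffDist_nonneg ?_ ?_
    · rintro z ⟨a, ha, c, hc, rfl⟩
      calc infDist (a + c) (B + C) ≤ infDist (a + c) ((fun b => b + c) '' B) := by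
            apply infDist_le_infDist_of_subset
            · rintro y ⟨b, hb, rfl⟩; exact Set.add_mem_add hb hc
            · exact hBne.image _
        _ = infDist a B := infDist_image (isometry_add_right c)
        _ ≤ hausdorffDist A B := infDist_le_hausdorffDist_of_mem ha hABfin
    · rintro z ⟨b, hb, c, hc, rfl⟩
      calc infDist (b + c) (A + C) ≤ infDist (b + c) ((fun a => a + c) '' A) := by
            apply infDist_le_infDist_of_subset
            · rintro y ⟨a, ha, rfl⟩; exact Set.add_mem_add ha hc
            · exact hAne.image _
        _ = infDist b A := infDist_image (isometry_add_right c)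
        _ ≤ hausdorffDist A B := by
            rw [hausdorffDist_comm]
            exact infDist_le_hausdorffDist_of_mem hb (by rwa [EMetric.hausdorffEdist_comm])
  · refine hausdorffDist_le_of_infDist hausdorffDist_nonneg ?_ ?_
    · exact fun a ha => infDist_le_hd_add hBne hCne hCb hBc hACfin ha
    · intro b hb
      rw [hausdorffDist_comm]
      exact infDist_le_hd_add hAne hCne hCb hAc (by rwa [EMetric.hausdorffEdist, EMetric.hausdorffEdist_comm]) hb
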